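/- Uniqueness of inversion-maximizers containing a given vertex set: if S is a subset of the vertices of the order polytope O(Z_n) that is contained in vert(σ) for some alternating permutation σ, then there is a unique alternating permutation maximizing inversion number among all alternating permutations τ with S ⊆ vert(τ). -/

import Mathlib

open Finset

/-- `σ` (0-indexed) is an alternating permutation: `σ 0 < σ 1 > σ 2 < …`. -/
def IsAlternating {n : ℕ} (σ : Equiv.Perm (Fin n)) : Prop :=
  ∀ i j : Fin n, (j : ℕ) = (i : ℕ) + 1 →
    ((Even (i : ℕ) → σ i < σ j) ∧ (Odd (i : ℕ) → σ j < σ i))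

/-- `k` (a 1-indexed value, `1 ≤ k ≤ n-1`) is a swap of `σ`:
writing `i, j` for the 0-indexed values `k-1, k`, we have `σ⁻¹(k) < σ⁻¹(k+1) - 1`. -/
def IsSwap {n : ℕ} (σ : Equiv.Perm (Fin n)) (k : ℕ) : Prop :=
  ∃ i j : Fin n, (i : ℕ) + 1 = k ∧ (j : ℕ) = k ∧ ((σ.symm i : ℕ) + 1 < (σ.symm j : ℕ))

instance {n : ℕ} (σ : Equiv.Perm (Fin n)) : DecidablePred (IsSwap σ) := fun k => by
  unfold IsSwap; infer_instance

/-- The set of swaps of `σ` (as 1-indexed values). -/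
def swapSet {n : ℕ} (σ : Equiv.Perm (Fin n)) : Finset ℕ :=
  (Finset.range n).filter (fun k => IsSwap σ k)

/-- The number of swaps of `σ`. -/
def swapCount {n : ℕ} (σ : Equiv.Perm (Fin n)) : ℕ := (swapSet σ).card

/-- Number of inversions of `σ`. -/
def invNum {n : ℕ} (σ : Equiv.Perm (Fin n)) : ℕ :=
  (Finset.univ.filter (fun p : Fin n × Fin n => p.1 < p.2 ∧ σ p.2 < σ p.1)).card

/-- The vertex `v_k^σ` (for `0 ≤ k ≤ n`): all-ones minus the sum of `e_{σ⁻¹(m)}`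
for the first `k` values `m`. -/
def vtx {n : ℕ} (σ : Equiv.Perm (Fin n)) (k : ℕ) : Fin n → ℕ :=
  fun j => if (σ j : ℕ) < k then 0 else 1

/-- The vertex set `vert(σ) = {v_0^σ, …, v_n^σ}` of the simplex `Δ^σ`. -/
def vert {n : ℕ} (σ : Equiv.Perm (Fin n)) : Finset (Fin n → ℕ) :=
  (Finset.range (n + 1)).image (vtx σ)

/-- The exclusion set of `σ`: vertices `v_k^σ` with `k` a swap of `σ`. -/
def excl {n : ℕ} (σ : Equiv.Perm (Fin n)) : Finset (Fin n → ℕ) :=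
  (((Finset.range (n + 1)).filter (fun k => IsSwap σ k))).image (vtx σ)

/-- `σ` swaps to `τ`: `τ` is obtained from `σ` by exchanging two consecutive values
`i < j = i+1` (0-indexed) at a swap position. -/
def SwapsTo {n : ℕ} (σ τ : Equiv.Perm (Fin n)) : Prop :=
  ∃ i j : Fin n, (j : ℕ) = (i : ℕ) + 1 ∧ ((σ.symm i : ℕ) + 1 < (σ.symm j : ℕ)) ∧
    τ = Equiv.swap i j * σ

/-- The order relation of the zig-zag poset `Z_n` (0-indexed): even indices are minimal,
odd indices are maximal, and an even index lies below its odd neighbours. -/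
def zigzagLE {n : ℕ} (i j : Fin n) : Prop :=
  i = j ∨ (Odd (j : ℕ) ∧ ((i : ℕ) + 1 = (j : ℕ) ∨ (i : ℕ) = (j : ℕ) + 1))

/-- A (down-closed) order ideal of the zig-zag poset `Z_n`. -/
def IsOrderIdeal {n : ℕ} (I : Finset (Fin n)) : Prop :=
  ∀ i j : Fin n, zigzagLE i j → j ∈ I → i ∈ I

/-- The Euler zig-zag number: the number of alternating permutations of length `n`. -/
noncomputable def eulerZigzag (n : ℕ) : ℕ := Nat.card {σ : Equiv.Perm (Fin n) // IsAlternating σ}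


/-! ### Auxiliary lemmas -/

lemma vtx_zero_iff {n : ℕ} (τ : Equiv.Perm (Fin n)) (m : ℕ) (x : Fin n) :
    vtx τ m x = 0 ↔ (τ x : ℕ) < m := by
  unfold vtx; split <;> simp_all

lemma card_filter_val_lt {n m : ℕ} (h : m ≤ n) :
    (Finset.univ.filter (fun v : Fin n => (v : ℕ) < m)).card = m := by
  have key : (Finset.univ.filter (fun v : Fin n => (v : ℕ) < m))
      = (Finset.range m).attachFin (fun a ha => lt_of_lt_of_le (mem_range.mp ha) h) := by
    ext v; simp [Finset.mem_attachFin]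
  rw [key, Finset.card_attachFin, Finset.card_range]

lemma card_vtx_zeros {n : ℕ} (τ : Equiv.Perm (Fin n)) {m : ℕ} (h : m ≤ n) :
    (Finset.univ.filter (fun x : Fin n => (τ x : ℕ) < m)).card = m := by
  have key : (Finset.univ.filter (fun x : Fin n => (τ x : ℕ) < m))
      = (Finset.univ.filter (fun v : Fin n => (v : ℕ) < m)).map τ.symm.toEmbedding := by
    ext x
    simp only [mem_filter, mem_univ, true_and, Finset.mem_map, Equiv.coe_toEmbedding]
    constructor
    · intro hx; exact ⟨τ x, hx, by simp⟩
    · rintro ⟨v, hv, rfl⟩; simpa using hv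
  rw [key, Finset.card_map, card_filter_val_lt h]

lemma vtx_level_eq {n : ℕ} {τ τ' : Equiv.Perm (Fin n)} {m m' : ℕ}
    (hm : m ≤ n) (hm' : m' ≤ n) (h : vtx τ m = vtx τ' m') : m = m' := by
  have : (Finset.univ.filter (fun x : Fin n => (τ x : ℕ) < m))
      = (Finset.univ.filter (fun x : Fin n => (τ' x : ℕ) < m')) := by
    ext x
    simp only [mem_filter, mem_univ, true_and]
    rw [← vtx_zero_iff, ← vtx_zero_iff, h]
  have h1 := card_vtx_zeros τ hm
  have h2 := card_vtx_zeros τ' hm'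
  rw [this, h2] at h1; exact h1.symm

lemma swap_lt_iff {n : ℕ} {i j : Fin n} (hij : (j : ℕ) = (i : ℕ) + 1) (a b : Fin n) :
    (Equiv.swap i j a < Equiv.swap i j b) ↔
      ((a < b ∧ ¬(a = i ∧ b = j)) ∨ (a = j ∧ b = i)) := by
  simp only [Equiv.swap_apply_def, Fin.lt_def, Fin.ext_iff]
  split_ifs <;> omega

lemma swap_step {n : ℕ} (S : Finset (Fin n → ℕ)) (τ : Equiv.Perm (Fin n))
    (hτ : IsAlternating τ) (hSτ : S ⊆ vert τ) {k : ℕ} (hk : IsSwap τ k)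
    (hfree : vtx τ k ∉ S) :
    ∃ τ₂ : Equiv.Perm (Fin n), IsAlternating τ₂ ∧ S ⊆ vert τ₂ ∧
      invNum τ₂ = invNum τ + 1 := by
  classical
  obtain ⟨i, j, hi, hj, hpq⟩ := hk
  have hij : (j : ℕ) = (i : ℕ) + 1 := by omega
  set p := τ.symm i with hp
  set q := τ.symm j with hq
  have htp : τ p = i := by simp [hp]
  have htq : τ q = j := by simp [hq]
  refine ⟨Equiv.swap i j * τ, ?_, ?_, ?_⟩
  · -- alternating
    intro x y hxy
    have hlt : ∀ u v : Fin n, (v : ℕ) = (u : ℕ) + 1 →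
        ((Equiv.swap i j * τ) u < (Equiv.swap i j * τ) v ↔ τ u < τ v) := by
      intro u v huv
      rw [Equiv.Perm.mul_apply, Equiv.Perm.mul_apply, swap_lt_iff hij]
      constructor
      · rintro (⟨h1, _⟩ | ⟨h1, h2⟩)
        · exact h1
        · exfalso
          have : u = q := by rw [← htq] at h1; exact τ.injective h1
          have : v = p := by rw [← htp] at h2; exact τ.injective h2
          subst u; subst v; omega
      · intro h1
        left
        refine ⟨h1, ?_⟩
        rintro ⟨e1, e2⟩
        have : u = p := by rw [← htp] at e1; exact τ.injective e1
        have : v = q := by rw [← htq] at e2; exact τ.injective e2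
        subst u; subst v; omega
    obtain ⟨h1, h2⟩ := hτ x y hxy
    exact ⟨fun he => (hlt x y hxy).mpr (h1 he),
           fun ho => by
             have := h2 ho
             have hiff := hlt x y hxy
             rcases lt_trichotomy ((Equiv.swap i j * τ) y) ((Equiv.swap i j * τ) x) with h | h | h
             · exact h
             · exfalso
               have hyx : y = x := (Equiv.swap i j * τ).injective h
               rw [hyx] at hxy; omega
             · exact absurd ((hlt x y hxy).mp h) (lt_asymm this)⟩
  · -- vert
    intro s hs
    obtain ⟨m, hm, rfl⟩ := Finset.mem_image.mp (hSτ hs)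
    have hmk : m ≠ k := by rintro rfl; exact hfree hs
    have : vtx (Equiv.swap i j * τ) m = vtx τ m := by
      funext x
      unfold vtx
      rw [Equiv.Perm.mul_apply]
      rcases eq_or_ne (τ x) i with he | hne1
      · rw [he, Equiv.swap_apply_left]
        have : ((j : ℕ) < m) ↔ ((i : ℕ) < m) := by omega
        simp [this, he]
      · rcases eq_or_ne (τ x) j with he | hne2
        · rw [he, Equiv.swap_apply_right]
          have : ((i : ℕ) < m) ↔ ((j : ℕ) < m) := by omega
          simp [this, he]
        · rw [Equiv.swap_apply_of_ne_of_ne hne1 hne2]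
    rw [← this]
    exact Finset.mem_image.mpr ⟨m, hm, rfl⟩
  · -- invNum
    unfold invNum
    have hkey : (Finset.univ.filter (fun r : Fin n × Fin n =>
        r.1 < r.2 ∧ (Equiv.swap i j * τ) r.2 < (Equiv.swap i j * τ) r.1))
        = insert (p, q) (Finset.univ.filter
            (fun r : Fin n × Fin n => r.1 < r.2 ∧ τ r.2 < τ r.1)) := by
      ext ⟨u, v⟩
      simp only [Finset.mem_filter, Finset.mem_univ, true_and, Finset.mem_insert,
        Prod.mk.injEq]
      simp only [Equiv.Perm.mul_apply]
      rw [swap_lt_iff hij]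
      constructor
      · rintro ⟨huv, (⟨h1, _⟩ | ⟨h1, h2⟩)⟩
        · exact Or.inr ⟨huv, h1⟩
        · left
          exact ⟨τ.injective (by rw [htp, h2]), τ.injective (by rw [htq, h1])⟩
      · rintro (⟨rfl, rfl⟩ | ⟨huv, h1⟩)
        · have hpltq : p < q := by
            rw [Fin.lt_def]; omega
          exact ⟨hpltq, Or.inr ⟨htq, htp⟩⟩
        · refine ⟨huv, Or.inl ⟨h1, ?_⟩⟩
          rintro ⟨e1, e2⟩
          have : v = p := τ.injective (by rw [htp, e1])
          have : u = q := τ.injective (by rw [htq, e2])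
          subst u; subst v
          rw [Fin.lt_def] at huv; omega
    rw [hkey, Finset.card_insert_of_notMem]
    simp only [Finset.mem_filter, Finset.mem_univ, true_and, not_and]
    intro _
    rw [htp, htq, Fin.lt_def]
    omega

lemma no_two_fixed {n : ℕ} (S : Finset (Fin n → ℕ)) (τ τ' : Equiv.Perm (Fin n))
    (hτ : IsAlternating τ) (hτ' : IsAlternating τ') (hSτ : S ⊆ vert τ)
    (hfix' : ∀ m : ℕ, IsSwap τ' m → vtx τ' m ∈ S)
    (k : ℕ) (hkn : k < n)
    (hlev : vtx τ (k + 1) = vtx τ' (k + 1))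
    (hlt : (τ.symm ⟨k, hkn⟩ : ℕ) < (τ'.symm ⟨k, hkn⟩ : ℕ)) : False := by
  classical
  set kF : Fin n := ⟨k, hkn⟩ with hkF
  set pF := τ.symm kF with hpF
  set p'F := τ'.symm kF with hp'F
  have htp : τ pF = kF := by simp [hpF]
  have ht'p' : τ' p'F = kF := by simp [hp'F]
  have hpne : pF ≠ p'F := fun h => by rw [h] at hlt; omega
  set a : ℕ := (τ' pF : ℕ) with ha
  have hank : τ' pF ≠ kF := by
    intro h
    exact hpne (by rw [hp'F, ← h, Equiv.symm_apply_apply])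
  have hak1 : a < k + 1 := by
    have := congrFun hlev pF
    unfold vtx at this
    rw [htp] at this
    simp only [hkF] at this
    rw [if_pos (by omega)] at this
    by_contra hcon
    rw [if_neg (by omega)] at this
    omega
  have hak : a < k := by
    rcases Nat.lt_or_ge a k with h | h
    · exact h
    · exfalso
      have : a = k := by omega
      exact hank (Fin.ext this)
  -- the position function
  set q : ℕ → ℕ := fun m => if h : m < n then ((τ'.symm ⟨m, h⟩ : Fin n) : ℕ) else 0 with hqdef
  have hq : ∀ m (h : m < n), q m = ((τ'.symm ⟨m, h⟩ : Fin n) : ℕ) := by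
    intro m h; simp [hqdef, h]
  have hqa : q a = (pF : ℕ) := by
    rw [hq a (by omega)]
    congr 1
    have : (⟨a, by omega⟩ : Fin n) = τ' pF := Fin.ext (by simp [ha])
    rw [this, Equiv.symm_apply_apply]
  have hqk : q k = (p'F : ℕ) := by rw [hq k hkn]
  -- freeness of the levels in (a, k]
  have hfreelev : ∀ m : ℕ, a < m → m ≤ k → vtx τ' m ∉ S := by
    intro m h1 h2 hmem
    obtain ⟨m'', hm'', heq⟩ := Finset.mem_image.mp (hSτ hmem)
    have hm''n : m'' ≤ n := by
      have := Finset.mem_range.mp hm''; omega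
    have : m'' = m := vtx_level_eq hm''n (by omega) heq
    subst this
    have := congrFun heq pF
    unfold vtx at this
    rw [htp] at this
    simp only [hkF] at this
    rw [if_neg (by omega), if_pos (by omega)] at this
    omega
  -- step condition
  have hstep : ∀ m : ℕ, a < m → m ≤ k → q m ≤ q (m - 1) + 1 := by
    intro m h1 h2
    by_contra hcon
    push_neg at hcon
    have hm1n : m - 1 < n := by omega
    have hmn : m < n := by omega
    have hswap : IsSwap τ' m := by
      refine ⟨⟨m - 1, hm1n⟩, ⟨m, hmn⟩, by simp; omega, rfl, ?_⟩
      rw [← hq (m-1) hm1n, ← hq m hmn]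
      omega
    exact hfreelev m h1 h2 (hfix' m hswap)
  -- crossing argument
  set M : Finset ℕ := (Finset.Icc a k).filter (fun m => q m ≤ (pF : ℕ)) with hM
  have haM : a ∈ M := by
    simp only [hM, Finset.mem_filter, Finset.mem_Icc]
    exact ⟨⟨le_refl a, le_of_lt hak⟩, le_of_eq hqa⟩
  have hMne : M.Nonempty := ⟨a, haM⟩
  set m' : ℕ := M.max' hMne with hm'
  have hm'mem : m' ∈ M := M.max'_mem hMne
  simp only [hM, Finset.mem_filter, Finset.mem_Icc] at hm'mem
  obtain ⟨⟨ham', hm'k⟩, hqm'⟩ := hm'mem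
  have hm'ltk : m' < k := by
    rcases Nat.lt_or_ge m' k with h | h
    · exact h
    · exfalso
      have : m' = k := by omega
      rw [this, hqk] at hqm'
      omega
  have hnotM : (m' + 1) ∉ M := by
    intro hmem
    have := M.le_max' _ hmem
    rw [← hm'] at this
    omega
  have hq1 : (pF : ℕ) < q (m' + 1) := by
    by_contra hcon
    push_neg at hcon
    exact hnotM (by
      simp only [hM, Finset.mem_filter, Finset.mem_Icc]
      exact ⟨⟨by omega, by omega⟩, hcon⟩)
  have hstep1 := hstep (m' + 1) (by omega) (by omega)
  simp only [Nat.add_sub_cancel] at hstep1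
  have hqm1 : q (m' + 1) = (pF : ℕ) + 1 := by omega
  have hqm'eq : q m' = (pF : ℕ) := by omega
  -- Fin-level consequences
  have hm1n : m' + 1 < n := by omega
  have hm'n : m' < n := by omega
  set yF := τ'.symm ⟨m' + 1, hm1n⟩ with hyF
  have hy : (yF : ℕ) = (pF : ℕ) + 1 := by rw [hyF, ← hq _ hm1n]; exact hqm1
  have hxp : τ'.symm ⟨m', hm'n⟩ = pF := by
    apply Fin.ext
    rw [← hq _ hm'n]; exact hqm'eq
  have ht'p : τ' pF = ⟨m', hm'n⟩ := by rw [← hxp, Equiv.apply_symm_apply]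
  have ht'y : τ' yF = ⟨m' + 1, hm1n⟩ := by rw [hyF, Equiv.apply_symm_apply]
  rcases Nat.even_or_odd (pF : ℕ) with hev | hod
  · -- even case: contradiction with alternation of τ
    have h1 := (hτ pF yF hy).1 hev
    rw [htp] at h1
    have h2 : (τ yF : ℕ) < k + 1 := by
      have h := congrFun hlev yF
      unfold vtx at h
      rw [ht'y] at h
      simp only [Fin.val_mk] at h
      rw [if_pos (show m' + 1 < k + 1 by omega)] at h
      by_contra hcon
      rw [if_neg hcon] at h
      omega
    have h3 : τ yF ≠ kF := by
      intro h
      have : yF = pF := by rw [hpF, ← h, Equiv.symm_apply_apply]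
      rw [this] at hy; omega
    have h4 : (τ yF : ℕ) ≠ k := fun h => h3 (Fin.ext h)
    rw [Fin.lt_def] at h1
    simp only [hkF] at h1
    omega
  · -- odd case: contradiction with alternation of τ'
    have h1 := (hτ' pF yF hy).2 hod
    rw [ht'p, ht'y, Fin.lt_def] at h1
    simp only [Fin.val_mk] at h1
    omega

lemma ite01_iff {A B : Prop} [Decidable A] [Decidable B]
    (h : (if A then (0:ℕ) else 1) = (if B then 0 else 1)) : A ↔ B := by
  split_ifs at h <;> simp_all

lemma fixed_unique {n : ℕ} (S : Finset (Fin n → ℕ)) (τ τ' : Equiv.Perm (Fin n))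
    (hτ : IsAlternating τ) (hτ' : IsAlternating τ')
    (hSτ : S ⊆ vert τ) (hSτ' : S ⊆ vert τ')
    (hfix : ∀ m : ℕ, IsSwap τ m → vtx τ m ∈ S)
    (hfix' : ∀ m : ℕ, IsSwap τ' m → vtx τ' m ∈ S) : τ = τ' := by
  classical
  set D : Finset ℕ := (Finset.range (n + 1)).filter (fun m => vtx τ m ≠ vtx τ' m) with hD
  by_cases hDe : D = ∅
  · -- all levels agree ⇒ τ = τ'
    have hall : ∀ m : ℕ, m ≤ n → vtx τ m = vtx τ' m := by
      intro m hm
      by_contra hcon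
      have : m ∈ D := by
        simp only [hD, Finset.mem_filter, Finset.mem_range]
        exact ⟨by omega, hcon⟩
      rw [hDe] at this
      exact absurd this (Finset.notMem_empty m)
    apply Equiv.ext
    intro x
    apply Fin.ext
    have h1 := ite01_iff (congrFun (hall ((τ x : ℕ) + 1) (by omega)) x)
    have h2 := ite01_iff (congrFun (hall ((τ' x : ℕ) + 1) (by omega)) x)
    have e1 : (τ' x : ℕ) < (τ x : ℕ) + 1 := h1.mp (by omega)
    have e2 : (τ x : ℕ) < (τ' x : ℕ) + 1 := h2.mpr (by omega)
    omega
  · have hDne : D.Nonempty := Finset.nonempty_iff_ne_empty.mpr hDe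
    set k : ℕ := D.max' hDne with hk
    have hkmem : k ∈ D := D.max'_mem hDne
    simp only [hD, Finset.mem_filter, Finset.mem_range] at hkmem
    obtain ⟨hkr, hkne⟩ := hkmem
    have hknn : k ≠ n := by
      intro h
      apply hkne
      funext x
      unfold vtx
      rw [if_pos (by omega), if_pos (by omega)]
    have hkn : k < n := by omega
    have hlev : vtx τ (k + 1) = vtx τ' (k + 1) := by
      by_contra hcon
      have : k + 1 ∈ D := by
        simp only [hD, Finset.mem_filter, Finset.mem_range]
        exact ⟨by omega, hcon⟩
      have := D.le_max' _ this
      rw [← hk] at this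
      omega
    set kF : Fin n := ⟨k, hkn⟩ with hkF
    have hpne : τ.symm kF ≠ τ'.symm kF := by
      intro hpp
      apply hkne
      funext x
      unfold vtx
      have hiff := ite01_iff (congrFun hlev x)
      by_cases hx : x = τ.symm kF
      · have e1 : τ x = kF := by rw [hx, Equiv.apply_symm_apply]
        have e2 : τ' x = kF := by rw [hx, hpp, Equiv.apply_symm_apply]
        rw [e1, e2]
      · have e1 : τ x ≠ kF := fun h => hx (by rw [← h, Equiv.symm_apply_apply])
        have e2 : τ' x ≠ kF := fun h => hx (by
          rw [hpp, ← h, Equiv.symm_apply_apply])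
        have e1' : (τ x : ℕ) ≠ k := fun h => e1 (Fin.ext h)
        have e2' : (τ' x : ℕ) ≠ k := fun h => e2 (Fin.ext h)
        have : ((τ x : ℕ) < k) ↔ ((τ' x : ℕ) < k) := by
          constructor <;> intro h
          · have := hiff.mp (by omega); omega
          · have := hiff.mpr (by omega); omega
        by_cases hc : (τ x : ℕ) < k
        · rw [if_pos hc, if_pos (this.mp hc)]
        · rw [if_neg hc, if_neg (fun hh => hc (this.mpr hh))]
    rcases lt_trichotomy ((τ.symm kF : ℕ)) ((τ'.symm kF : ℕ)) with h | h | h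
    · exact absurd (no_two_fixed S τ τ' hτ hτ' hSτ hfix' k hkn hlev h) id
    · exact absurd (Fin.ext h) hpne
    · exact absurd (no_two_fixed S τ' τ hτ' hτ hSτ' hfix k hkn hlev.symm h) id

/-- if `S` is contained in the vertex set of some alternating permutation,
then there is a unique alternating permutation maximizing the inversion number among all
alternating permutations whose vertex set contains `S`. -/
theorem unique_max_inversion_containing (n : ℕ) (S : Finset (Fin n → ℕ))
    (σ : Equiv.Perm (Fin n)) (hσ : IsAlternating σ) (hS : S ⊆ vert σ) :
    ∃! ρ : Equiv.Perm (Fin n), IsAlternating ρ ∧ S ⊆ vert ρ ∧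
      ∀ τ : Equiv.Perm (Fin n), IsAlternating τ → S ⊆ vert τ → invNum τ ≤ invNum ρ := by
  classical
  -- the finite set of feasible permutations
  obtain ⟨ρ, hρmem, hρmax⟩ := Finset.exists_max_image
    ((Finset.univ : Finset (Equiv.Perm (Fin n))).filter
      (fun τ => IsAlternating τ ∧ S ⊆ vert τ)) invNum
    ⟨σ, by simp [hσ, hS]⟩
  simp only [Finset.mem_filter, Finset.mem_univ, true_and] at hρmem hρmax
  have hmax : ∀ τ : Equiv.Perm (Fin n), IsAlternating τ → S ⊆ vert τ →
      invNum τ ≤ invNum ρ := fun τ h1 h2 => hρmax τ ⟨h1, h2⟩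
  have fixed_of_max : ∀ ρ' : Equiv.Perm (Fin n), IsAlternating ρ' → S ⊆ vert ρ' →
      (∀ τ : Equiv.Perm (Fin n), IsAlternating τ → S ⊆ vert τ → invNum τ ≤ invNum ρ') →
      ∀ m : ℕ, IsSwap ρ' m → vtx ρ' m ∈ S := by
    intro ρ' h1 h2 h3 m hm
    by_contra hfree
    obtain ⟨τ₂, ht1, ht2, ht3⟩ := swap_step S ρ' h1 h2 hm hfree
    have := h3 τ₂ ht1 ht2
    omega
  refine ⟨ρ, ⟨hρmem.1, hρmem.2, hmax⟩, ?_⟩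
  rintro ρ' ⟨h1, h2, h3⟩
  exact fixed_unique S ρ' ρ h1 hρmem.1 h2 hρmem.2
    (fixed_of_max ρ' h1 h2 h3) (fixed_of_max ρ hρmem.1 hρmem.2 hmax)
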